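/- Let φ be an automorphism of a finite nilpotent group G with gcd(|φ|, |G|) = 1. Then every element g ∈ G can be written uniquely as g = c·u where c is a fixed point of φ and u = v⁻¹·φ(v) for some v ∈ G. -/

import Mathlib

open Subgroup

section Helpers

variable {G : Type*} [Group G]

/-- If `φ e = e` and `φ x = x * e` then `e = 1`, for coprime `φ`. -/
lemma aux_fix_eq_one [Finite G] (φ : MulAut G)
    (hcop : Nat.Coprime (orderOf φ) (Nat.card G))
    {x e : G} (he : φ e = e) (hx : φ x = x * e) : e = 1 := by
  have key : ∀ i : ℕ, (φ ^ i) x = x * e ^ i := by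
    intro i
    induction i with
    | zero => simp
    | succ i ih =>
      rw [pow_succ', MulAut.mul_apply, ih, map_mul, map_pow, he, hx, mul_assoc, ← pow_succ']
  have h1 : e ^ orderOf φ = 1 := by
    have h := key (orderOf φ)
    rw [pow_orderOf_eq_one] at h
    have : x * 1 = x * e ^ orderOf φ := by simpa using h
    exact (mul_left_cancel this).symm
  have h2 : orderOf e ∣ orderOf φ := orderOf_dvd_of_pow_eq_one h1
  have h3 : orderOf e ∣ Nat.card G := orderOf_dvd_natCard e
  have h4 : orderOf e ∣ 1 := hcop ▸ Nat.dvd_gcd h2 h3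
  rw [← orderOf_eq_one_iff]
  exact Nat.dvd_one.mp h4

end Helpers

section Abelian

variable {A : Type*} [CommGroup A] [Finite A]

lemma abelian_exists (ψ : MulAut A)
    (hcop : Nat.Coprime (orderOf ψ) (Nat.card A)) (a : A) :
    ∃ e z : A, ψ e = e ∧ a = e * (z⁻¹ * ψ z) := by
  have hc : (Nat.card A).Coprime (orderOf ψ) := hcop.symm
  obtain ⟨b, hb⟩ : ∃ b : A, b ^ orderOf ψ = a :=
    ⟨(powCoprime hc).symm a, by simpa [powCoprime] using (powCoprime hc).apply_symm_apply a⟩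
  set n := orderOf ψ with hn
  set N : A := ∏ i ∈ Finset.range n, (ψ ^ i) b with hN
  have hNfix : ψ N = N := by
    have h1 : ∏ i ∈ Finset.range (n + 1), (ψ ^ i) b = N * b := by
      rw [Finset.prod_range_succ, hn, pow_orderOf_eq_one]
      simp [hN, hn]
    have h2 : ∏ i ∈ Finset.range (n + 1), (ψ ^ i) b = ψ N * b := by
      rw [Finset.prod_range_succ', hN, map_prod]
      simp [pow_succ', MulAut.mul_apply]
    exact mul_right_cancel (h2.symm.trans h1)
  let ρ : A →* A := ψ.toMonoidHom / MonoidHom.id A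
  have hρ : ∀ z : A, ρ z = z⁻¹ * ψ z := fun z => by
    simp [ρ, div_eq_mul_inv, mul_comm]
  have hstep : ∀ i : ℕ, b * ((ψ ^ i) b)⁻¹ ∈ ρ.range := by
    intro i
    induction i with
    | zero => exact ⟨1, by simpa using map_one ρ⟩
    | succ i ih =>
      have hexp : b * ((ψ ^ (i + 1)) b)⁻¹ = (b * ((ψ ^ i) b)⁻¹) * (ρ ((ψ ^ i) b))⁻¹ := by
        rw [hρ, pow_succ', MulAut.mul_apply]
        apply Additive.ofMul.injective
        simp only [ofMul_mul, ofMul_inv]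
        abel
      rw [hexp]
      exact mul_mem ih (inv_mem (MonoidHom.mem_range.mpr ⟨_, rfl⟩))
  have hprod : b ^ n * N⁻¹ ∈ ρ.range := by
    have hexp : b ^ n * N⁻¹ = ∏ i ∈ Finset.range n, (b * ((ψ ^ i) b)⁻¹) := by
      rw [Finset.prod_mul_distrib, Finset.prod_const, Finset.card_range,
        ← Finset.prod_inv_distrib]
    rw [hexp]
    exact Subgroup.prod_mem _ fun i _ => hstep i
  obtain ⟨z, hz⟩ := hprod
  refine ⟨N, z, hNfix, ?_⟩
  rw [← hρ z, hz, ← hb, mul_comm (b ^ n) N⁻¹, mul_inv_cancel_left]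

lemma abelian_exists' (ψ : MulAut A)
    (hcop : Nat.Coprime (orderOf ψ) (Nat.card A)) (d : A) :
    ∃ e z : A, ψ e = e ∧
      d = e * ((z⁻¹ * ψ z)⁻¹ * ψ (z⁻¹ * ψ z)) := by
  obtain ⟨e, z₀, he, hd⟩ := abelian_exists ψ hcop d
  let ρ : A →* A := ψ.toMonoidHom / MonoidHom.id A
  have hρ : ∀ z : A, ρ z = z⁻¹ * ψ z := fun z => by
    simp [ρ, div_eq_mul_inv, mul_comm]
  let K := ρ.range
  let ρK : K → K := fun k => ⟨ρ k, MonoidHom.mem_range.mpr ⟨_, rfl⟩⟩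
  have hinj : Function.Injective ρK := by
    intro k₁ k₂ h
    have h' : ρ (↑k₁ * (↑k₂)⁻¹) = 1 := by
      have : ρ ↑k₁ = ρ ↑k₂ := congrArg Subtype.val h
      rw [map_mul, map_inv, this, mul_inv_cancel]
    have hfix : ψ (↑k₁ * (↑k₂)⁻¹ : A) = ↑k₁ * (↑k₂)⁻¹ := by
      have := h'
      rw [hρ] at this
      calc ψ (↑k₁ * (↑k₂)⁻¹ : A) = (↑k₁ * (↑k₂)⁻¹ : A) * ((↑k₁ * (↑k₂)⁻¹ : A)⁻¹ * ψ (↑k₁ * (↑k₂)⁻¹ : A)) := by group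
        _ = ↑k₁ * (↑k₂)⁻¹ := by rw [this, mul_one]
    obtain ⟨w, hw⟩ : ∃ w, ρ w = ↑k₁ * (↑k₂)⁻¹ := mul_mem k₁.2 (inv_mem k₂.2)
    have hxw : ψ w = w * (↑k₁ * (↑k₂)⁻¹ : A) := by
      rw [← hw, hρ]; group
    have h1 : (↑k₁ * (↑k₂)⁻¹ : A) = 1 := aux_fix_eq_one ψ hcop hfix hxw
    have : (k₁ : A) = k₂ := by
      have := mul_inv_eq_one.mp h1
      exact this
    exact Subtype.ext this
  have hsurj : Function.Surjective ρK := Finite.surjective_of_injective hinj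
  obtain ⟨k, hk⟩ := hsurj ⟨ρ z₀, MonoidHom.mem_range.mpr ⟨_, rfl⟩⟩
  obtain ⟨z, hz⟩ := k.2
  refine ⟨e, z, he, ?_⟩
  have hkk : ρ ↑k = ρ z₀ := congrArg Subtype.val hk
  rw [hd, ← hρ z₀, ← hkk, ← hz, ← hρ, ← hρ]
end Abelian

section Auts
variable {G : Type*} [Group G]

lemma center_apply_mem (φ : MulAut G) {z : G} (hz : z ∈ center G) : φ z ∈ center G := by
  rw [Subgroup.mem_center_iff] at hz ⊢
  intro g
  calc g * φ z = φ (φ.symm g * z) := by simp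
    _ = φ (z * φ.symm g) := by rw [hz]
    _ = φ z * g := by simp

/-- restriction of automorphisms to the center, as a monoid hom -/
def centerAutHom (G : Type*) [Group G] : MulAut G →* MulAut (center G) where
  toFun φ :=
    { toFun := fun z => ⟨φ z, center_apply_mem φ z.2⟩
      invFun := fun z => ⟨φ.symm z, center_apply_mem φ.symm z.2⟩
      left_inv := fun z => Subtype.ext (φ.symm_apply_apply (z : G))
      right_inv := fun z => Subtype.ext (φ.apply_symm_apply (z : G))
      map_mul' := fun x y => Subtype.ext (map_mul φ (x : G) (y : G)) }
  map_one' := by ext z; rfl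
  map_mul' φ₁ φ₂ := by ext z; rfl

@[simp] lemma centerAutHom_coe (φ : MulAut G) (z : center G) :
    ((centerAutHom G φ z : center G) : G) = φ (z : G) := rfl

/-- the automorphism of the quotient by the center, as a monoid hom -/
def quotAutHom (G : Type*) [Group G] : MulAut G →* MulAut (G ⧸ center G) where
  toFun φ := QuotientGroup.congr (center G) (center G) φ
    (Subgroup.characteristic_iff_map_eq.mp inferInstance φ)
  map_one' := by
    ext q
    induction q using QuotientGroup.induction_on with
    | _ x => rfl
  map_mul' φ₁ φ₂ := by
    ext q
    induction q using QuotientGroup.induction_on with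
    | _ x => rfl

@[simp] lemma quotAutHom_mk (φ : MulAut G) (x : G) :
    quotAutHom G φ (QuotientGroup.mk x) = QuotientGroup.mk (φ x) := rfl

end Auts

section Main
universe u
open QuotientGroup
open scoped IsMulCommutative

lemma exists_decomp (G : Type u) [Group G] [Group.IsNilpotent G] :
    ∀ [Finite G] (φ : MulAut G), Nat.Coprime (orderOf φ) (Nat.card G) →
      ∀ g : G, ∃ c v : G, φ c = c ∧ g = c * (v⁻¹ * φ v) := by
  refine nilpotent_center_quotient_ind
    (P := fun G _ _ => ∀ [Finite G] (φ : MulAut G),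
      Nat.Coprime (orderOf φ) (Nat.card G) →
        ∀ g : G, ∃ c v : G, φ c = c ∧ g = c * (v⁻¹ * φ v))
    G ?_ ?_
  · intro G _ _ _ φ _ g
    exact ⟨1, 1, by simp, Subsingleton.elim _ _⟩
  · intro G _ _ IH _ φ hcop g
    set ψ : MulAut (center G) := centerAutHom G φ with hψdef
    set χ : MulAut (G ⧸ center G) := quotAutHom G φ with hχdef
    have hcopψ : Nat.Coprime (orderOf ψ) (Nat.card (center G)) :=
      Nat.Coprime.coprime_dvd_left (orderOf_map_dvd (centerAutHom G) φ)
        (hcop.coprime_dvd_right (Subgroup.card_subgroup_dvd_card _))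
    have hcopχ : Nat.Coprime (orderOf χ) (Nat.card (G ⧸ center G)) :=
      Nat.Coprime.coprime_dvd_left (orderOf_map_dvd (quotAutHom G) φ)
        (hcop.coprime_dvd_right (Subgroup.card_quotient_dvd_card _))
    obtain ⟨cb, vb, hcb, hgb⟩ := IH χ hcopχ (QuotientGroup.mk g)
    obtain ⟨c, rfl⟩ := QuotientGroup.mk_surjective cb
    obtain ⟨v, rfl⟩ := QuotientGroup.mk_surjective vb
    have hmem : (c * (v⁻¹ * φ v))⁻¹ * g ∈ Subgroup.center G := by
      rw [← QuotientGroup.eq]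
      rw [hgb, hχdef, quotAutHom_mk]
      rfl
    set z : G := (c * (v⁻¹ * φ v))⁻¹ * g with hzdef
    have hg2 : g = c * (v⁻¹ * φ v) * z := by rw [hzdef]; group
    set a : G := c * z with hadef
    have hga : g = a * (v⁻¹ * φ v) := by
      rw [hg2, hadef, mul_assoc, Subgroup.mem_center_iff.mp hmem (v⁻¹ * φ v), ← mul_assoc]
    have hmka : (QuotientGroup.mk a : G ⧸ Subgroup.center G) = QuotientGroup.mk c := by
      rw [hadef]
      symm
      rw [QuotientGroup.eq]
      simpa using hmem
    have hdmem : a⁻¹ * φ a ∈ Subgroup.center G := by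
      rw [← QuotientGroup.eq]
      calc (QuotientGroup.mk a : G ⧸ Subgroup.center G) = QuotientGroup.mk c := hmka
        _ = χ (QuotientGroup.mk c) := hcb.symm
        _ = χ (QuotientGroup.mk a) := by rw [hmka]
        _ = QuotientGroup.mk (φ a) := by rw [hχdef, quotAutHom_mk]
    set dZ : Subgroup.center G := ⟨a⁻¹ * φ a, hdmem⟩ with hdZdef
    obtain ⟨e, z₁, he, hdZ⟩ := abelian_exists' ψ hcopψ dZ
    set p : G := (z₁ : G) with hpdef
    set q : G := ((ψ z₁ : Subgroup.center G) : G) with hqdef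
    set r : G := ((ψ (ψ z₁) : Subgroup.center G) : G) with hrdef
    have hφp : φ p = q := rfl
    have hφq : φ q = r := rfl
    set w : G := v * p with hwdef
    set c' : G := g * (φ w)⁻¹ * w with hc'def
    -- c' = a * p * q⁻¹
    have hc'eq : c' = a * p * q⁻¹ := by
      have hkey : (a * p * q⁻¹) * (w⁻¹ * φ w) = g := by
        have hq : q ∈ Subgroup.center G := (ψ z₁).2
        calc (a * p * q⁻¹) * (w⁻¹ * φ w)
            = a * p * (q⁻¹ * ((p⁻¹ * v⁻¹ * φ v) * q)) := by
              rw [hwdef, map_mul, hφp]; group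
          _ = a * p * (q⁻¹ * (q * (p⁻¹ * v⁻¹ * φ v))) := by
              rw [Subgroup.mem_center_iff.mp hq (p⁻¹ * v⁻¹ * φ v)]
          _ = a * (v⁻¹ * φ v) := by group
          _ = g := hga.symm
      rw [hc'def, ← hkey]
      group
    have hφa : φ a = a * (dZ : G) := by
      have : (dZ : G) = a⁻¹ * φ a := rfl
      rw [this]; group
    -- the center-level identity
    have hZeq : dZ * ψ z₁ * (ψ (ψ z₁))⁻¹ = z₁ * (ψ z₁)⁻¹ * e := by
      rw [hdZ, map_mul, map_inv]
      apply Additive.ofMul.injective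
      simp only [ofMul_mul, ofMul_inv]
      abel
    have hGeq : (dZ : G) * q * r⁻¹ = p * q⁻¹ * (e : G) := by
      have := congrArg (fun t : Subgroup.center G => (t : G)) hZeq
      simpa [hpdef, hqdef, hrdef] using this
    have hφc' : φ c' = c' * (e : G) := by
      rw [hc'eq, map_mul, map_mul, map_inv, hφp, hφq, hφa]
      calc a * (dZ : G) * q * r⁻¹ = a * ((dZ : G) * q * r⁻¹) := by group
        _ = a * (p * q⁻¹ * (e : G)) := by rw [hGeq]
        _ = a * p * q⁻¹ * (e : G) := by group
    have hee : φ (e : G) = (e : G) := by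
      have h1 : ((ψ e : Subgroup.center G) : G) = (e : G) := congrArg _ he
      have h2 : φ (e : G) = ((ψ e : Subgroup.center G) : G) := rfl
      rw [h1] at h2
      exact h2
    have he1 : (e : G) = 1 := aux_fix_eq_one φ hcop hee hφc'
    refine ⟨c', w, ?_, ?_⟩
    · rw [hφc', he1, mul_one]
    · rw [hc'def]; group

end Main

/-- Let `φ` be an automorphism of a finite nilpotent group `G` of order coprime to `|G|`.
Then every `g ∈ G` can be written uniquely as `g = c * u` where `c` is a fixed point of `φ`
and `u = v⁻¹ * φ v` for some `v ∈ G`. -/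
theorem coprime_aut_unique_decomposition
    {G : Type*} [Group G] [Finite G] [Group.IsNilpotent G]
    (φ : MulAut G) (hcop : Nat.Coprime (orderOf φ) (Nat.card G)) (g : G) :
    ∃! cu : G × G, φ cu.1 = cu.1 ∧ (∃ v : G, cu.2 = v⁻¹ * φ v) ∧ g = cu.1 * cu.2 := by
  classical
  have hex : ∀ x : G, ∃ c v : G, φ c = c ∧ x = c * (v⁻¹ * φ v) :=
    fun x => exists_decomp G φ hcop x
  let C : Subgroup G :=
    { carrier := {x | φ x = x}
      one_mem' := map_one φ
      mul_mem' := fun {a b} (ha : φ a = a) (hb : φ b = b) => by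
        show φ (a * b) = a * b
        rw [map_mul, ha, hb]
      inv_mem' := fun {a} (ha : φ a = a) => by
        show φ a⁻¹ = a⁻¹
        rw [map_inv, ha] }
  have hmemC : ∀ x : G, x ∈ C ↔ φ x = x := fun x => Iff.rfl
  let K : Set G := Set.range fun v : G => v⁻¹ * φ v
  let f : G → K := fun v => ⟨v⁻¹ * φ v, ⟨v, rfl⟩⟩
  have hfiff : ∀ v w : G, f v = f w ↔ w * v⁻¹ ∈ C := by
    intro v w
    rw [hmemC]
    constructor
    · intro h
      have h' : v⁻¹ * φ v = w⁻¹ * φ w := congrArg Subtype.val h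
      have h2 : φ w = w * (v⁻¹ * φ v) := by rw [h']; group
      rw [map_mul, map_inv, h2]
      group
    · intro hc
      have hc' : φ w * (φ v)⁻¹ = w * v⁻¹ := by rw [← map_inv, ← map_mul]; exact hc
      have h2 : φ w = w * v⁻¹ * φ v := by
        calc φ w = (φ w * (φ v)⁻¹) * φ v := by group
          _ = w * v⁻¹ * φ v := by rw [hc']
      exact Subtype.ext (show v⁻¹ * φ v = w⁻¹ * φ w by rw [h2]; group)
  have hsec : ∀ k : K, ∃ v : G, f v = k := by
    rintro ⟨x, v, hv⟩
    exact ⟨v, Subtype.ext hv⟩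
  choose s hs using hsec
  let E : G ≃ C × K :=
    { toFun := fun v => (⟨v * (s (f v))⁻¹, (hfiff (s (f v)) v).mp (hs (f v))⟩, f v)
      invFun := fun p => (p.1 : G) * s p.2
      left_inv := fun v => by simp
      right_inv := fun p => by
        obtain ⟨⟨c, hc⟩, k⟩ := p
        have h1 : f (c * s k) = k := by
          have : f (c * s k) = f (s k) := by
            refine ((hfiff (s k) (c * s k)).mpr ?_).symm
            have : c * s k * (s k)⁻¹ = c := by group
            rw [this]
            exact hc
          rw [this, hs]
        refine Prod.ext (Subtype.ext ?_) h1
        show c * s k * (s (f (c * s k)))⁻¹ = c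
        rw [h1]
        group }
  have hcard : Nat.card (C × K) = Nat.card G := (Nat.card_congr E).symm
  let m : C × K → G := fun p => (p.1 : G) * (p.2 : G)
  have hmsur : Function.Surjective m := by
    intro x
    obtain ⟨c, v, hc, hx⟩ := hex x
    exact ⟨(⟨c, hc⟩, ⟨v⁻¹ * φ v, ⟨v, rfl⟩⟩), hx.symm⟩
  have hmbij : Function.Bijective m :=
    (Nat.bijective_iff_surjective_and_card m).mpr ⟨hmsur, hcard⟩
  obtain ⟨c, v, hc, hg⟩ := hex g
  refine ⟨(c, v⁻¹ * φ v), ⟨hc, ⟨v, rfl⟩, hg⟩, ?_⟩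
  rintro ⟨c₂, u₂⟩ ⟨h1, ⟨v₂, hv₂⟩, h2⟩
  have hm : m (⟨c₂, h1⟩, ⟨u₂, ⟨v₂, hv₂.symm⟩⟩) = m (⟨c, hc⟩, ⟨v⁻¹ * φ v, ⟨v, rfl⟩⟩) := by
    show c₂ * u₂ = c * (v⁻¹ * φ v)
    rw [← h2, ← hg]
  have := hmbij.1 hm
  rw [Prod.ext_iff] at this
  obtain ⟨h3, h4⟩ := this
  exact Prod.ext (congrArg Subtype.val h3) (congrArg Subtype.val h4)
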